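/- Let g : ℝ → ℝ be Lipschitz, set h(y) := g(y) + y²/2 for y ∈ ℝ, and let ȳ ∈ ℝ be a global minimum point of h (such a point exists since h is continuous and coercive). Then there exists ε₀ ∈ (0,1) such that for all ε ∈ (0, ε₀), | 2ε log[ (4πε)^{−1/2} ∫_ℝ e^{−(h(y)−h(ȳ))/(2ε)} dy ] | ≤ 2ε |log ε|. -/

import Mathlib

noncomputable section

open MeasureTheory

set_option maxHeartbeats 1000000 in
/-- Let `g : ℝ → ℝ` be Lipschitz, `h(y) = g(y) + y²/2`, and let `ȳ` be a
global minimum point of `h`. Then there is `ε₀ ∈ (0,1)` such that for all `ε ∈ (0,ε₀)`,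
`|2ε log[(4πε)^{-1/2} ∫_ℝ e^{-(h(y)-h(ȳ))/(2ε)} dy]| ≤ 2ε|log ε|`. -/
theorem statement8
    (g : ℝ → ℝ) (K : NNReal) (hg : LipschitzWith K g)
    (h : ℝ → ℝ) (hh : ∀ y : ℝ, h y = g y + y ^ 2 / 2)
    (ybar : ℝ) (hybar : ∀ y : ℝ, h ybar ≤ h y) :
    ∃ ε₀ ∈ Set.Ioo (0:ℝ) 1, ∀ ε ∈ Set.Ioo (0:ℝ) ε₀,
      |2 * ε * Real.log ((Real.sqrt (4 * Real.pi * ε))⁻¹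
          * ∫ y : ℝ, Real.exp (-(h y - h ybar) / (2 * ε)))|
        ≤ 2 * ε * |Real.log ε| := by
  have hπ : (0:ℝ) < Real.pi := Real.pi_pos
  set M : ℝ := (K : ℝ) + |ybar| with hMdef
  have hM0 : 0 ≤ M := by positivity
  -- Lipschitz bounds
  have hgb : ∀ y : ℝ, |g y - g ybar| ≤ (K : ℝ) * |y - ybar| := by
    intro y
    have := hg.dist_le_mul y ybar
    rwa [Real.dist_eq, Real.dist_eq] at this
  -- upper and lower bounds on h y - h ybar
  have hup : ∀ y : ℝ, h y - h ybar ≤ (y - ybar) ^ 2 / 2 + M * |y - ybar| := by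
    intro y
    have h1 : g y - g ybar ≤ (K : ℝ) * |y - ybar| := (le_abs_self _).trans (hgb y)
    have h2 : ybar * (y - ybar) ≤ |ybar| * |y - ybar| := by
      calc ybar * (y - ybar) ≤ |ybar * (y - ybar)| := le_abs_self _
        _ = |ybar| * |y - ybar| := abs_mul _ _
    rw [hh y, hh ybar]
    nlinarith [h1, h2]
  have hlo : ∀ y : ℝ, (y - ybar) ^ 2 / 2 - M * |y - ybar| ≤ h y - h ybar := by
    intro y
    have h1 : g ybar - g y ≤ (K : ℝ) * |y - ybar| := by
      have h1' : -(K * |y - ybar|) ≤ g y - g ybar := neg_le_of_abs_le (hgb y)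
      linarith
    have h2 : -(|ybar| * |y - ybar|) ≤ ybar * (y - ybar) := by
      calc -(|ybar| * |y - ybar|) = -|ybar * (y - ybar)| := by rw [abs_mul]
        _ ≤ ybar * (y - ybar) := neg_abs_le _
    rw [hh y, hh ybar]
    nlinarith [h1, h2]
  have hnn : ∀ y : ℝ, 0 ≤ h y - h ybar := fun y => sub_nonneg.2 (hybar y)
  -- continuity of h
  have hhc : Continuous h := by
    have : h = fun y => g y + y ^ 2 / 2 := funext hh
    rw [this]
    exact hg.continuous.add ((continuous_pow 2).div_const 2)
  -- constants
  set R : ℝ := 4 * M + 1 with hRdef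
  have hR1 : (1:ℝ) ≤ R := by simp only [hRdef]; linarith
  have hR0 : (0:ℝ) < R := lt_of_lt_of_le one_pos hR1
  set c₀ : ℝ := Real.exp (-(1/4 + M/2)) with hc0def
  have hc00 : 0 < c₀ := Real.exp_pos _
  set C₁ : ℝ := 2 * R + Real.sqrt (8 * Real.pi) with hC1def
  have hC1one : (1:ℝ) < C₁ := by
    have : (0:ℝ) ≤ Real.sqrt (8 * Real.pi) := Real.sqrt_nonneg _
    simp only [hC1def]; linarith
  have hC10 : (0:ℝ) < C₁ := lt_trans one_pos hC1one
  set c₂ : ℝ := 2 * c₀ / Real.sqrt (4 * Real.pi) with hc2def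
  have hc20 : 0 < c₂ := by
    apply div_pos (by linarith) (Real.sqrt_pos.2 (by linarith))
  clear_value M R c₀ C₁ c₂
  refine ⟨min (1/2) (min ((C₁ ^ 2)⁻¹) (c₂ ^ 2)), ⟨by positivity,
    lt_of_le_of_lt (min_le_left _ _) (by norm_num)⟩, ?_⟩
  intro ε hε
  obtain ⟨hε0, hεlt⟩ := hε
  have hε1 : ε < 1 := lt_of_lt_of_le hεlt ((min_le_left _ _).trans (by norm_num))
  have hεC1 : ε < (C₁ ^ 2)⁻¹ :=
    lt_of_lt_of_le hεlt ((min_le_right _ _).trans (min_le_left _ _))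
  have hεc2 : ε < c₂ ^ 2 :=
    lt_of_lt_of_le hεlt ((min_le_right _ _).trans (min_le_right _ _))
  have h2e : (0:ℝ) < 2 * ε := by linarith
  set f : ℝ → ℝ := fun y => Real.exp (-(h y - h ybar) / (2 * ε)) with hfdef
  have hfpos : ∀ y, 0 < f y := fun y => Real.exp_pos _
  have hfle1 : ∀ y, f y ≤ 1 := by
    intro y
    rw [hfdef]
    simp only
    rw [show (1:ℝ) = Real.exp 0 by simp]
    exact Real.exp_le_exp.2
      (div_nonpos_of_nonpos_of_nonneg (by linarith [hnn y]) (by linarith))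
  -- continuity / measurability
  have hcont : Continuous f :=
    Real.continuous_exp.comp (((hhc.sub continuous_const).neg).div_const _)
  -- gaussian integrability
  have hGint : ∀ b : ℝ, 0 < b →
      Integrable (fun y : ℝ => Real.exp (-b * (y - ybar) ^ 2)) := by
    intro b hb
    exact (integrable_exp_neg_mul_sq hb).comp_sub_right ybar
  have hb8 : (0:ℝ) < 1 / (8 * ε) := by positivity
  -- integrability of f
  have hfint : Integrable f := by
    apply Integrable.mono' ((hGint _ hb8).const_mul (Real.exp (M ^ 2 / (2 * ε))))
      hcont.aestronglyMeasurable
    filter_upwards with y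
    rw [Real.norm_eq_abs, abs_of_pos (hfpos y), hfdef]
    simp only
    rw [← Real.exp_add]
    apply Real.exp_le_exp.2
    have key : (y - ybar) ^ 2 / 4 - M ^ 2 ≤ h y - h ybar := by
      have h1 := hlo y
      have habs : |y - ybar| ^ 2 = (y - ybar) ^ 2 := sq_abs _
      nlinarith [sq_nonneg (|y - ybar| / 2 - M)]
    have step : -(h y - h ybar) / (2 * ε) ≤ (M ^ 2 - (y - ybar) ^ 2 / 4) / (2 * ε) :=
      (div_le_div_iff_of_pos_right h2e).2 (by linarith)
    refine step.trans (le_of_eq ?_)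
    field_simp
    ring
  set I : ℝ := ∫ y : ℝ, f y with hIdef
  -- lower bound on the integral
  have hIlb : 2 * ε * c₀ ≤ I := by
    set T := Metric.closedBall ybar ε with hTdef
    have hTm : MeasurableSet T := measurableSet_closedBall
    have hflow : ∀ x ∈ T, c₀ ≤ f x := by
      intro x hx
      rw [Metric.mem_closedBall, Real.dist_eq] at hx
      rw [hfdef, hc0def]
      simp only
      apply Real.exp_le_exp.2
      have ha2 : (x - ybar) ^ 2 ≤ ε ^ 2 := by
        rw [← sq_abs]; exact pow_le_pow_left₀ (abs_nonneg _) hx 2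
      have hMa : M * |x - ybar| ≤ M * ε := mul_le_mul_of_nonneg_left hx hM0
      have hee : ε ^ 2 ≤ ε := by nlinarith
      have h2 : h x - h ybar ≤ ε / 2 + M * ε := by linarith [hup x]
      rw [le_div_iff₀ h2e]
      have hgo : -(1 / 4 + M / 2) * (2 * ε) = -(ε / 2 + M * ε) := by ring
      rw [hgo]
      linarith
    have hstep : 2 * ε * c₀ ≤ ∫ y in T, f y := by
      have hconst : ∫ y in T, c₀ = 2 * ε * c₀ := by
        rw [setIntegral_const, hTdef, measureReal_def, Real.volume_closedBall,
          ENNReal.toReal_ofReal (by linarith), smul_eq_mul]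
      calc 2 * ε * c₀ = ∫ y in T, c₀ := hconst.symm
        _ ≤ ∫ y in T, f y := setIntegral_mono_on
            (integrableOn_const (by
              rw [hTdef, Real.volume_closedBall]; exact ENNReal.ofReal_ne_top))
            hfint.integrableOn hTm hflow
    exact hstep.trans (setIntegral_le_integral hfint
      (Filter.Eventually.of_forall fun y => (hfpos y).le))
  have hI0 : 0 < I := lt_of_lt_of_le (by positivity) hIlb
  -- upper bound on the integral
  have hIub : I ≤ C₁ := by
    set S := Metric.closedBall ybar R with hSdef
    have hSm : MeasurableSet S := measurableSet_closedBall
    have hsplit : I = (∫ y in S, f y) + ∫ y in Sᶜ, f y := by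
      rw [hIdef]; exact (integral_add_compl hSm hfint).symm
    have hpart1 : ∫ y in S, f y ≤ 2 * R := by
      calc ∫ y in S, f y ≤ ∫ y in S, (1:ℝ) := setIntegral_mono_on
            hfint.integrableOn
            (integrableOn_const (by
              rw [hSdef, Real.volume_closedBall]; exact ENNReal.ofReal_ne_top))
            hSm (fun x _ => hfle1 x)
        _ = 2 * R := by
            rw [setIntegral_const, hSdef, measureReal_def, Real.volume_closedBall,
              ENNReal.toReal_ofReal (by linarith), smul_eq_mul, mul_one]
    have hpart2 : ∫ y in Sᶜ, f y ≤ Real.sqrt (8 * Real.pi) := by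
      have hpw : ∀ x ∈ Sᶜ, f x ≤ Real.exp (-(1 / (8 * ε)) * (x - ybar) ^ 2) := by
        intro x hx
        rw [Set.mem_compl_iff, hSdef, Metric.mem_closedBall, Real.dist_eq,
          not_le] at hx
        rw [hfdef]
        simp only
        apply Real.exp_le_exp.2
        have h1 := hlo x
        have habs : |x - ybar| ^ 2 = (x - ybar) ^ 2 := sq_abs _
        have key : (x - ybar) ^ 2 / 4 ≤ h x - h ybar := by
          nlinarith [abs_nonneg (x - ybar), hx.le]
        have step : -(h x - h ybar) / (2 * ε) ≤ (-((x - ybar) ^ 2 / 4)) / (2 * ε) :=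
          (div_le_div_iff_of_pos_right h2e).2 (by linarith)
        refine step.trans (le_of_eq ?_)
        rw [neg_div, div_div, neg_mul, neg_inj, one_div, inv_mul_eq_div]
        congr 1
        ring
      have hc1 : ∫ y in Sᶜ, f y ≤ ∫ y in Sᶜ, Real.exp (-(1 / (8 * ε)) * (y - ybar) ^ 2) :=
        setIntegral_mono_on hfint.integrableOn (hGint _ hb8).integrableOn hSm.compl hpw
      have hc2' : ∫ y in Sᶜ, Real.exp (-(1 / (8 * ε)) * (y - ybar) ^ 2)
          ≤ ∫ y : ℝ, Real.exp (-(1 / (8 * ε)) * (y - ybar) ^ 2) :=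
        setIntegral_le_integral (hGint _ hb8)
          (Filter.Eventually.of_forall fun y => (Real.exp_pos _).le)
      have hgauss : ∫ y : ℝ, Real.exp (-(1 / (8 * ε)) * (y - ybar) ^ 2)
          = Real.sqrt (8 * Real.pi * ε) := by
        rw [MeasureTheory.integral_sub_right_eq_self
          (fun y => Real.exp (-(1 / (8 * ε)) * y ^ 2)) ybar, integral_gaussian]
        congr 1
        field_simp
      have hsq : Real.sqrt (8 * Real.pi * ε) ≤ Real.sqrt (8 * Real.pi) :=
        Real.sqrt_le_sqrt (by nlinarith)
      calc ∫ y in Sᶜ, f y ≤ Real.sqrt (8 * Real.pi * ε) := by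
            rw [← hgauss]; exact hc1.trans hc2'
        _ ≤ Real.sqrt (8 * Real.pi) := hsq
    rw [hsplit, hC1def]
    linarith
  -- pass to X
  set X : ℝ := (Real.sqrt (4 * Real.pi * ε))⁻¹ * I with hXdef
  have hs4 : (0:ℝ) < Real.sqrt (4 * Real.pi * ε) := Real.sqrt_pos.2 (by positivity)
  have hsε : (0:ℝ) < Real.sqrt ε := Real.sqrt_pos.2 hε0
  have hXub : X ≤ C₁ / Real.sqrt ε := by
    have h4e : ε ≤ 4 * Real.pi * ε := by
      have hp1 : (0:ℝ) ≤ 4 * Real.pi - 1 := by linarith [Real.pi_gt_three]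
      nlinarith [mul_nonneg hp1 hε0.le]
    have h1 : Real.sqrt ε ≤ Real.sqrt (4 * Real.pi * ε) := Real.sqrt_le_sqrt h4e
    rw [hXdef, inv_mul_eq_div]
    calc I / Real.sqrt (4 * Real.pi * ε) ≤ C₁ / Real.sqrt (4 * Real.pi * ε) := by
          gcongr
      _ ≤ C₁ / Real.sqrt ε := by gcongr
  have hXlb : c₂ * Real.sqrt ε ≤ X := by
    have heq : (2 * ε * c₀) / Real.sqrt (4 * Real.pi * ε) = c₂ * Real.sqrt ε := by
      rw [Real.sqrt_mul (by positivity) ε, hc2def]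
      have hss : Real.sqrt ε * Real.sqrt ε = ε := Real.mul_self_sqrt hε0.le
      rw [div_mul_eq_mul_div, div_eq_div_iff
        (by positivity : Real.sqrt (4 * Real.pi) * Real.sqrt ε ≠ 0)
        (by positivity : Real.sqrt (4 * Real.pi) ≠ 0)]
      linear_combination (-(2 * c₀ * Real.sqrt (4 * Real.pi))) * hss
    rw [hXdef, inv_mul_eq_div, ← heq]
    gcongr
  have hX0 : 0 < X := lt_of_lt_of_le (by positivity) hXlb
  -- log bounds
  have hlogε : Real.log ε < 0 := Real.log_neg hε0 hε1
  have hlogub : Real.log X ≤ -Real.log ε := by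
    have h1 : Real.log X ≤ Real.log (C₁ / Real.sqrt ε) :=
      Real.log_le_log hX0 hXub
    rw [Real.log_div (ne_of_gt hC10) (ne_of_gt hsε), Real.log_sqrt hε0.le] at h1
    have h2 : Real.log ε ≤ Real.log ((C₁ ^ 2)⁻¹) := Real.log_le_log hε0 hεC1.le
    rw [Real.log_inv, Real.log_pow] at h2
    push_cast at h2
    linarith
  have hloglb : Real.log ε ≤ Real.log X := by
    have h1 : Real.log (c₂ * Real.sqrt ε) ≤ Real.log X :=
      Real.log_le_log (by positivity) hXlb
    rw [Real.log_mul (ne_of_gt hc20) (ne_of_gt hsε), Real.log_sqrt hε0.le] at h1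
    have h2 : Real.log ε ≤ Real.log (c₂ ^ 2) := Real.log_le_log hε0 hεc2.le
    rw [Real.log_pow] at h2
    push_cast at h2
    linarith
  -- finish
  have habsX : |Real.log X| ≤ |Real.log ε| := by
    rw [abs_of_neg hlogε]
    exact abs_le.2 ⟨by linarith, hlogub⟩
  calc |2 * ε * Real.log X| = 2 * ε * |Real.log X| := by
        rw [abs_mul, abs_of_pos (by linarith : (0:ℝ) < 2 * ε)]
    _ ≤ 2 * ε * |Real.log ε| :=
        mul_le_mul_of_nonneg_left habsX (by linarith)
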